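/- An oscillatory matrix is eventually strictly totally positive: if A is totally nonnegative and some power A^m is strictly totally positive, then there exists k₀ such that A^k is strictly totally positive for all k ≥ k₀. -/

import Mathlib

open Matrix Polynomial Filter

variable {n : ℕ}

/-- The minor of `A` with row set `r` and column set `c` (taken in increasing order). -/
noncomputable def minor (A : Matrix (Fin n) (Fin n) ℝ) (r c : Finset (Fin n))
    (h : c.card = r.card) : ℝ :=
  (A.submatrix (fun i : Fin r.card => (r.orderIsoOfFin rfl i).1)
      (fun i : Fin r.card => (c.orderIsoOfFin h i).1)).det

/-- The `j`-th compound matrix of `A`: the matrix of all `j × j` minors of `A`,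
indexed by the `j`-element subsets of `Fin n` (ordered increasingly). -/
noncomputable def compound (A : Matrix (Fin n) (Fin n) ℝ) (j : ℕ) :
    Matrix {s : Finset (Fin n) // s.card = j} {s : Finset (Fin n) // s.card = j} ℝ :=
  Matrix.of fun r c =>
    (A.submatrix (fun i : Fin j => (r.1.orderIsoOfFin r.2 i).1)
      (fun i : Fin j => (c.1.orderIsoOfFin c.2 i).1)).det

/-- Characteristic polynomial of a real matrix, viewed over `ℂ`. -/
noncomputable def charC {m : Type*} [Fintype m] [DecidableEq m] (A : Matrix m m ℝ) :
    Polynomial ℂ :=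
  (A.map (Complex.ofReal)).charpoly

/-- `lam` is a positive simple strictly dominant eigenvalue of `A` with a strictly
positive eigenvector (the strong Perron–Frobenius property, with specified value). -/
def StrongPFAt {m : Type*} [Fintype m] [DecidableEq m] (A : Matrix m m ℝ) (lam : ℝ) : Prop :=
  0 < lam ∧ (charC A).IsRoot (lam : ℂ) ∧ (charC A).rootMultiplicity (lam : ℂ) = 1 ∧
    (∀ μ : ℂ, (charC A).IsRoot μ → μ ≠ (lam : ℂ) → ‖μ‖ < lam) ∧
    ∃ v : m → ℝ, (∀ i, 0 < v i) ∧ A *ᵥ v = lam • v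

/-- The strong Perron–Frobenius property. -/
def StrongPF {m : Type*} [Fintype m] [DecidableEq m] (A : Matrix m m ℝ) : Prop :=
  ∃ lam : ℝ, StrongPFAt A lam

/-- `M` is strictly `J`-sign-symmetric (for the given set `J`). -/
def SJSWith (J : Finset (Fin n)) (M : Matrix (Fin n) (Fin n) ℝ) : Prop :=
  ∀ i j : Fin n, ((i ∈ J ↔ j ∈ J) → 0 < M i j) ∧ (¬(i ∈ J ↔ j ∈ J) → M i j < 0)

/-- `M` is strictly J-sign-symmetric for some `J ⊆ {1,…,n}`. -/
def SJS (M : Matrix (Fin n) (Fin n) ℝ) : Prop :=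
  ∃ J : Finset (Fin n), SJSWith J M

/-- Eventually strictly J-sign-symmetric. -/
def ESJS (A : Matrix (Fin n) (Fin n) ℝ) : Prop :=
  ∃ k0 : ℕ, ∀ k ≥ k0, SJS (A ^ k)

/-- Eventually (entrywise) positive. -/
def EvPos {m : Type*} [Fintype m] [DecidableEq m] (A : Matrix m m ℝ) : Prop :=
  ∃ k0 : ℕ, ∀ k ≥ k0, ∀ i j, 0 < (A ^ k) i j

/-- Strictly totally positive: all minors of all orders are positive. -/
def STP (A : Matrix (Fin n) (Fin n) ℝ) : Prop :=
  ∀ (r c : Finset (Fin n)) (h : c.card = r.card), r.Nonempty → 0 < minor A r c h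

/-- Totally nonnegative: all minors of all orders are nonnegative. -/
def TotNonneg (A : Matrix (Fin n) (Fin n) ℝ) : Prop :=
  ∀ (r c : Finset (Fin n)) (h : c.card = r.card), 0 ≤ minor A r c h

/-- Eventually strictly totally positive. -/
def ESTP (A : Matrix (Fin n) (Fin n) ℝ) : Prop :=
  ∃ k0 : ℕ, ∀ k ≥ k0, STP (A ^ k)

/-- The checkerboard transform `S* = ((-1)^(i+j) s_ij)`. -/
def checker (S : Matrix (Fin n) (Fin n) ℝ) : Matrix (Fin n) (Fin n) ℝ :=
  Matrix.of fun i j => (-1 : ℝ) ^ ((i : ℕ) + (j : ℕ)) * S i j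

/-- The exterior product `x₀ ∧ ⋯ ∧ x_{j-1}` of the first `j` of the vectors `x`,
as a vector indexed by `j`-element subsets of `Fin n`. -/
noncomputable def wedge (x : Fin n → Fin n → ℝ) (j : ℕ) (hj : j ≤ n) :
    {s : Finset (Fin n) // s.card = j} → ℝ :=
  fun s => (Matrix.of fun a b : Fin j => x (Fin.castLE hj b) (s.1.orderIsoOfFin s.2 a).1).det


section CB
variable {N j : ℕ}

lemma det_eq_sum_col {k : ℕ} (M : Matrix (Fin k) (Fin k) ℝ) :
    M.det = ∑ σ : Equiv.Perm (Fin k), (Equiv.Perm.sign σ : ℝ) * ∏ i, M i (σ i) := by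
  rw [← Matrix.det_transpose, Matrix.det_apply']
  rfl

noncomputable def monoSel (s : {s : Finset (Fin N) // s.card = j}) : Fin j → Fin N :=
  fun i => (s.1.orderIsoOfFin s.2 i).1

lemma monoSel_injective (s : {s : Finset (Fin N) // s.card = j}) :
    Function.Injective (monoSel s) :=
  fun _ _ hab => (s.1.orderIsoOfFin s.2).injective (Subtype.ext hab)

lemma monoSel_mem (s : {s : Finset (Fin N) // s.card = j}) (i : Fin j) : monoSel s i ∈ s.1 :=
  (s.1.orderIsoOfFin s.2 i).2

lemma image_monoSel (s : {s : Finset (Fin N) // s.card = j}) :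
    Finset.image (monoSel s) Finset.univ = s.1 := by
  apply Finset.eq_of_subset_of_card_le
  · intro x hx
    simp only [Finset.mem_image] at hx
    obtain ⟨i, _, rfl⟩ := hx
    exact monoSel_mem s i
  · rw [Finset.card_image_of_injective _ (monoSel_injective s), Finset.card_univ,
      Fintype.card_fin, s.2]

lemma orderIsoOfFin_congr {α : Type*} [LinearOrder α] {s t : Finset α} {k : ℕ} (hst : s = t)
    (hs : s.card = k) (ht : t.card = k) (i : Fin k) :
    (s.orderIsoOfFin hs i).1 = (t.orderIsoOfFin ht i).1 := by subst hst; rfl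

lemma step1 (A : Matrix (Fin j) (Fin N) ℝ) (B : Matrix (Fin N) (Fin j) ℝ) :
    (A * B).det = ∑ f : Fin j → Fin N, (∏ i, A i (f i)) * (B.submatrix f id).det := by
  calc (A * B).det
      = ∑ σ : Equiv.Perm (Fin j), (Equiv.Perm.sign σ : ℝ) * ∏ i, ∑ k, A i k * B k (σ i) := by
        rw [det_eq_sum_col]; rfl
    _ = ∑ σ : Equiv.Perm (Fin j), ∑ f : Fin j → Fin N,
          (Equiv.Perm.sign σ : ℝ) * ∏ i, A i (f i) * B (f i) (σ i) := by
        refine Finset.sum_congr rfl fun σ _ => ?_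
        rw [Finset.prod_univ_sum, Finset.mul_sum]
        rw [Fintype.piFinset_univ]
    _ = ∑ f : Fin j → Fin N, ∑ σ : Equiv.Perm (Fin j),
          (Equiv.Perm.sign σ : ℝ) * ∏ i, A i (f i) * B (f i) (σ i) := Finset.sum_comm
    _ = ∑ f : Fin j → Fin N, (∏ i, A i (f i)) * (B.submatrix f id).det := by
        refine Finset.sum_congr rfl fun f _ => ?_
        rw [det_eq_sum_col, Finset.mul_sum]
        refine Finset.sum_congr rfl fun σ _ => ?_
        rw [Finset.prod_mul_distrib]
        simp only [Matrix.submatrix_apply, id_eq]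
        ring

noncomputable def groupEquiv :
    ({s : Finset (Fin N) // s.card = j} × Equiv.Perm (Fin j)) ≃
      {f : Fin j → Fin N // Function.Injective f} where
  toFun p := ⟨monoSel p.1 ∘ p.2, (monoSel_injective p.1).comp p.2.injective⟩
  invFun f :=
    ⟨⟨Finset.image f.1 Finset.univ, by
        rw [Finset.card_image_of_injective _ f.2, Finset.card_univ, Fintype.card_fin]⟩,
      Equiv.ofBijective (fun i =>
          ((Finset.image f.1 Finset.univ).orderIsoOfFin
            (by rw [Finset.card_image_of_injective _ f.2, Finset.card_univ,
              Fintype.card_fin])).symm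
          ⟨f.1 i, Finset.mem_image_of_mem _ (Finset.mem_univ i)⟩)
      ((Finite.injective_iff_bijective).mp (fun a b hab => by
        apply f.2
        have := congrArg ((Finset.image f.1 Finset.univ).orderIsoOfFin
          (by rw [Finset.card_image_of_injective _ f.2, Finset.card_univ,
            Fintype.card_fin])) hab
        rw [OrderIso.apply_symm_apply, OrderIso.apply_symm_apply] at this
        exact congrArg Subtype.val this))⟩
  left_inv := by
    rintro ⟨s, π⟩
    have ht : Finset.image (monoSel s ∘ π) Finset.univ = s.1 := by
      rw [← Finset.image_image, Finset.image_univ_equiv, image_monoSel]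
    refine Prod.ext (Subtype.ext ht) (Equiv.ext fun i => ?_)
    simp only [Equiv.ofBijective_apply, Function.comp_apply]
    rw [OrderIso.symm_apply_eq]
    exact Subtype.ext (orderIsoOfFin_congr ht _ s.2 (π i)).symm
  right_inv := by
    rintro ⟨f, hf⟩
    apply Subtype.ext
    funext i
    simp [monoSel]

end CB

section CB2
variable {N j : ℕ}

theorem cauchyBinet (A : Matrix (Fin j) (Fin N) ℝ) (B : Matrix (Fin N) (Fin j) ℝ) :
    (A * B).det = ∑ s : {s : Finset (Fin N) // s.card = j},
      (A.submatrix id (monoSel s)).det * (B.submatrix (monoSel s) id).det := by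
  rw [step1]
  have h1 : ∑ f : Fin j → Fin N, (∏ i, A i (f i)) * (B.submatrix f id).det
      = ∑ f ∈ Finset.univ.filter (fun f : Fin j → Fin N => Function.Injective f),
          (∏ i, A i (f i)) * (B.submatrix f id).det := by
    refine (Finset.sum_subset (Finset.filter_subset _ _) fun f _ hf => ?_).symm
    simp only [Finset.mem_filter, Finset.mem_univ, true_and] at hf
    rw [Function.not_injective_iff] at hf
    obtain ⟨a, b, hab, hne⟩ := hf
    rw [Matrix.det_zero_of_row_eq hne (by funext k; simp [hab]), mul_zero]
  rw [h1]
  rw [Finset.sum_filter]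
  have h2 : ∑ f : Fin j → Fin N, (if Function.Injective f then
        (∏ i, A i (f i)) * (B.submatrix f id).det else 0)
      = ∑ f : {f : Fin j → Fin N // Function.Injective f},
          (∏ i, A i (f.1 i)) * (B.submatrix f.1 id).det := by
    rw [← Finset.sum_filter]
    exact (Finset.sum_subtype _ (by simp) _)
  rw [h2, ← Fintype.sum_equiv (groupEquiv (N := N) (j := j))
      (fun p => (∏ i, A i ((monoSel p.1 ∘ p.2) i)) * (B.submatrix (monoSel p.1 ∘ p.2) id).det)
      (fun f => (∏ i, A i (f.1 i)) * (B.submatrix f.1 id).det) (fun p => rfl),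
    Fintype.sum_prod_type]
  refine Finset.sum_congr rfl fun s _ => ?_
  have hB : ∀ π : Equiv.Perm (Fin j), (B.submatrix (monoSel s ∘ π) id).det
      = (Equiv.Perm.sign π : ℝ) * (B.submatrix (monoSel s) id).det :=
    fun π => Matrix.det_permute π (B.submatrix (monoSel s) id)
  calc ∑ π : Equiv.Perm (Fin j),
        (∏ i, A i ((monoSel s ∘ π) i)) * (B.submatrix (monoSel s ∘ π) id).det
      = (∑ π : Equiv.Perm (Fin j), (Equiv.Perm.sign π : ℝ) *
          ∏ i, A i (monoSel s (π i))) * (B.submatrix (monoSel s) id).det := by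
        rw [Finset.sum_mul]
        refine Finset.sum_congr rfl fun π _ => ?_
        rw [hB π]
        simp only [Function.comp_apply]
        ring
    _ = (A.submatrix id (monoSel s)).det * (B.submatrix (monoSel s) id).det := by
        rw [det_eq_sum_col (A.submatrix id (monoSel s))]
        simp only [Matrix.submatrix_apply, id_eq]

end CB2


section Minor
variable {n : ℕ}

lemma minor_eq_det' (A : Matrix (Fin n) (Fin n) ℝ) (r c : Finset (Fin n)) (h : c.card = r.card)
    {k : ℕ} (hk : r.card = k) :
    minor A r c h = (A.submatrix (fun i : Fin k => (r.orderIsoOfFin hk i).1)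
      (fun i : Fin k => (c.orderIsoOfFin (h.trans hk) i).1)).det := by
  subst hk; rfl

lemma minor_mul (A B : Matrix (Fin n) (Fin n) ℝ) (r c : Finset (Fin n)) (h : c.card = r.card) :
    minor (A * B) r c h = ∑ s : {s : Finset (Fin n) // s.card = r.card},
      minor A r s.1 s.2 * minor B s.1 c (h.trans s.2.symm) := by
  have key : (A * B).submatrix (fun i : Fin r.card => ((r.orderIsoOfFin rfl) i).1)
        (fun i : Fin r.card => ((c.orderIsoOfFin h) i).1)
      = (A.submatrix (fun i : Fin r.card => ((r.orderIsoOfFin rfl) i).1) id) *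
        (B.submatrix id (fun i : Fin r.card => ((c.orderIsoOfFin h) i).1)) := by
    ext i k
    simp [Matrix.mul_apply]
  show ((A * B).submatrix _ _).det = _
  rw [key, cauchyBinet]
  refine Finset.sum_congr rfl fun s _ => ?_
  rw [Matrix.submatrix_submatrix, Matrix.submatrix_submatrix]
  rw [minor_eq_det' B s.1 c (h.trans s.2.symm) s.2]
  rfl

lemma totNonneg_mul {A B : Matrix (Fin n) (Fin n) ℝ} (hA : TotNonneg A) (hB : TotNonneg B) :
    TotNonneg (A * B) := by
  intro r c h
  rw [minor_mul]
  exact Finset.sum_nonneg fun s _ =>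
    mul_nonneg (hA r s.1 s.2) (hB s.1 c (h.trans s.2.symm))

lemma totNonneg_pow {A : Matrix (Fin n) (Fin n) ℝ} (hA : TotNonneg A) :
    ∀ j : ℕ, 1 ≤ j → TotNonneg (A ^ j) := by
  intro j hj
  induction j with
  | zero => omega
  | succ j ih =>
    rcases Nat.eq_zero_or_pos j with h0 | h1
    · subst h0; simpa using hA
    · rw [pow_succ]
      exact totNonneg_mul (ih h1) hA

lemma minor_one (r : Finset (Fin n)) : minor (1 : Matrix (Fin n) (Fin n) ℝ) r r rfl = 1 := by
  show ((1 : Matrix (Fin n) (Fin n) ℝ).submatrix _ _).det = 1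
  rw [Matrix.submatrix_one _ (fun a b hab => (r.orderIsoOfFin rfl).injective (Subtype.ext hab)),
    Matrix.det_one]

lemma exists_minor_ne_zero {M : Matrix (Fin n) (Fin n) ℝ} (hdet : M.det ≠ 0)
    (r : Finset (Fin n)) :
    ∃ s : {s : Finset (Fin n) // s.card = r.card}, minor M r s.1 s.2 ≠ 0 := by
  by_contra hall
  push_neg at hall
  have h1 : minor (M * M⁻¹) r r rfl = 0 := by
    rw [minor_mul]
    exact Finset.sum_eq_zero fun s _ => by rw [hall s, zero_mul]
  rw [Matrix.mul_nonsing_inv M (isUnit_iff_ne_zero.mpr hdet), minor_one] at h1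
  exact one_ne_zero h1

lemma stp_mul_left {A B : Matrix (Fin n) (Fin n) ℝ} (hA : TotNonneg A) (hdetA : A.det ≠ 0)
    (hB : STP B) : STP (A * B) := by
  intro r c h hr
  rw [minor_mul]
  obtain ⟨s0, hs0⟩ := exists_minor_ne_zero hdetA r
  refine Finset.sum_pos' (fun s _ => mul_nonneg (hA r s.1 s.2) (le_of_lt (hB s.1 c _ ?_)))
    ⟨s0, Finset.mem_univ _, mul_pos (lt_of_le_of_ne (hA r s0.1 s0.2) (Ne.symm hs0))
      (hB s0.1 c _ ?_)⟩
  · exact Finset.card_pos.mp (by rw [s.2]; exact Finset.card_pos.mpr hr)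
  · exact Finset.card_pos.mp (by rw [s0.2]; exact Finset.card_pos.mpr hr)

lemma minor_univ_eq_det (M : Matrix (Fin n) (Fin n) ℝ) :
    minor M Finset.univ Finset.univ rfl = M.det := by
  exact Matrix.det_submatrix_equiv_self
    (((Finset.univ.orderIsoOfFin rfl).toEquiv.trans
      (Equiv.subtypeUnivEquiv fun x => Finset.mem_univ x))) M

end Minor

/-- an oscillatory matrix is eventually strictly totally positive. -/
theorem stmt12 (A : Matrix (Fin n) (Fin n) ℝ) (m : ℕ) (hm : 0 < m)
    (hTN : TotNonneg A) (hSTP : STP (A ^ m)) :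
    ∃ k0 : ℕ, ∀ k ≥ k0, STP (A ^ k) := by
  have hdetm : (A ^ m).det ≠ 0 := by
    rcases Nat.eq_zero_or_pos n with h0 | hn
    · subst h0
      rw [Matrix.det_isEmpty]
      exact one_ne_zero
    · have huniv : (Finset.univ : Finset (Fin n)).Nonempty := ⟨⟨0, hn⟩, Finset.mem_univ _⟩
      have hpos := hSTP Finset.univ Finset.univ rfl huniv
      rw [minor_univ_eq_det] at hpos
      exact ne_of_gt hpos
  have hdetA : A.det ≠ 0 := by
    intro h0
    apply hdetm
    rw [Matrix.det_pow, h0, zero_pow (Nat.pos_iff_ne_zero.mp hm)]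
  refine ⟨m, fun k hk => ?_⟩
  obtain ⟨j, rfl⟩ : ∃ j, k = j + m := ⟨k - m, (Nat.sub_add_cancel hk).symm⟩
  rcases Nat.eq_zero_or_pos j with h0 | hj
  · subst h0; simpa using hSTP
  · rw [pow_add]
    refine stp_mul_left (totNonneg_pow hTN j hj) ?_ hSTP
    rw [Matrix.det_pow]
    exact pow_ne_zero _ hdetA
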